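/- arXiv:1401.2823 — 5 statements merged into one kernel-verified Lean document; each statement's English description precedes it below -/
import Mathlib

section
/- For every h > 0, ∫₀^∞ u·J₀(u·h)/(1 + u²)² du = (h/2)·K₁(h). Consequently, for η1 = 2 the two-dimensional Spartan covariance C(h) = (η0/2π)·∫₀^∞ u·J₀(u·h)/(1 + 2u² + u⁴) du equals η0·h·K₁(h)/(4π) for every amplitude η0 > 0. -/
open MeasureTheory Real

/-- Bessel function of the first kind of order zero,
`J₀(x) = (1/π) ∫₀^π cos (x sin θ) dθ`. -/
noncomputable def besselJ0 (x : ℝ) : ℝ :=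
  (1 / Real.pi) * ∫ θ in (0:ℝ)..Real.pi, Real.cos (x * Real.sin θ)

/-- Modified Bessel function of the second kind of order `p` (for `x > 0`),
`K_p(x) = ∫₀^∞ exp (−x cosh t) cosh (p t) dt`. -/
noncomputable def besselK (p x : ℝ) : ℝ :=
  ∫ t in Set.Ioi (0:ℝ), Real.exp (-x * Real.cosh t) * Real.cosh (p * t)

section Aux

open Set Finset

/-- J₀ is continuous. -/
lemma besselJ0_continuous : Continuous besselJ0 := by
  unfold besselJ0
  refine continuous_const.mul ?_
  exact intervalIntegral.continuous_parametric_intervalIntegral_of_continuous'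
    (f := fun x θ => Real.cos (x * Real.sin θ)) (by fun_prop) 0 Real.pi

/-- |J₀(x)| ≤ 1. -/
lemma abs_besselJ0_le_one (x : ℝ) : |besselJ0 x| ≤ 1 := by
  unfold besselJ0
  have h1 : ‖∫ θ in (0:ℝ)..Real.pi, Real.cos (x * Real.sin θ)‖ ≤ 1 * |Real.pi - 0| := by
    apply intervalIntegral.norm_integral_le_of_norm_le_const
    intro θ _
    simpa using Real.abs_cos_le_one _
  rw [Real.norm_eq_abs] at h1
  rw [abs_mul]
  calc |1 / Real.pi| * |∫ θ in (0:ℝ)..Real.pi, Real.cos (x * Real.sin θ)|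
      ≤ |1 / Real.pi| * (1 * |Real.pi - 0|) := by
        exact mul_le_mul_of_nonneg_left h1 (abs_nonneg _)
    _ = 1 := by
        rw [abs_of_nonneg (by positivity : (0:ℝ) ≤ 1 / Real.pi), sub_zero,
          abs_of_nonneg Real.pi_pos.le]
        field_simp

/-- Wallis-type product. -/
lemma wallis_prod (k : ℕ) :
    ∏ i ∈ Finset.range k, ((2*(i:ℝ)+1)/(2*i+2)) = ((Nat.factorial (2*k)) : ℝ) / (4^k * ((Nat.factorial k) : ℝ)^2) := by
  induction k with
  | zero => simp
  | succ k ih =>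
    rw [Finset.prod_range_succ, ih]
    have h1 : (2*(k+1)) = (2*k+1) + 1 := by ring
    rw [h1, Nat.factorial_succ, Nat.factorial_succ, Nat.factorial_succ]
    push_cast
    have h2 : ((Nat.factorial (2*k)) : ℝ) ≠ 0 := Nat.cast_ne_zero.mpr (Nat.factorial_ne_zero _)
    have h3 : ((Nat.factorial k) : ℝ) ≠ 0 := Nat.cast_ne_zero.mpr (Nat.factorial_ne_zero _)
    have h4 : (4:ℝ)^k ≠ 0 := by positivity
    have h5 : (2*(k:ℝ)+2) ≠ 0 := by positivity
    field_simp
    ring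

/-- Integral of even powers of sine over `[0, π]`. -/
lemma integral_sin_pow_even' (k : ℕ) :
    (∫ θ in (0:ℝ)..Real.pi, Real.sin θ ^ (2*k))
      = Real.pi * ((Nat.factorial (2*k)) : ℝ) / (4^k * ((Nat.factorial k) : ℝ)^2) := by
  rw [integral_sin_pow_even, wallis_prod, mul_div_assoc]

/-- Power series for J₀. -/
lemma besselJ0_eq_tsum (x : ℝ) :
    besselJ0 x = ∑' k : ℕ, (-1)^k * x^(2*k) / (4^k * ((Nat.factorial k) : ℝ)^2) := by
  have hπ : (0:ℝ) ≤ Real.pi := Real.pi_pos.le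
  unfold besselJ0
  rw [intervalIntegral.integral_of_le hπ]
  set F : ℕ → ℝ → ℝ := fun k θ => (-1)^k * (x * Real.sin θ)^(2*k) / ((Nat.factorial (2*k)) : ℝ) with hF
  have hcos : ∀ θ : ℝ, Real.cos (x * Real.sin θ) = ∑' k, F k θ := fun θ =>
    (Real.hasSum_cos (x * Real.sin θ)).tsum_eq.symm
  have hFk_int : ∀ k, IntegrableOn (F k) (Ioc 0 Real.pi) := by
    intro k
    apply Continuous.integrableOn_Ioc
    fun_prop
  have hbound : ∀ k, (∫ θ in Ioc (0:ℝ) Real.pi, ‖F k θ‖)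
      ≤ Real.pi * (|x|^(2*k) / ((Nat.factorial (2*k)) : ℝ)) := by
    intro k
    have : ∀ θ ∈ Ioc (0:ℝ) Real.pi, ‖F k θ‖ ≤ |x|^(2*k) / ((Nat.factorial (2*k)) : ℝ) := by
      intro θ _
      rw [hF]
      simp only [norm_mul, norm_div, norm_pow, norm_neg, norm_one, one_pow, one_mul,
        Real.norm_eq_abs]
      rw [Nat.abs_cast]
      have hb : |x| * |Real.sin θ| ≤ |x| := by
        nlinarith [Real.abs_sin_le_one θ, abs_nonneg x, abs_nonneg (Real.sin θ)]
      gcongr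
    calc (∫ θ in Ioc (0:ℝ) Real.pi, ‖F k θ‖)
        ≤ ∫ _ in Ioc (0:ℝ) Real.pi, |x|^(2*k) / ((Nat.factorial (2*k)) : ℝ) := by
          apply setIntegral_mono_on (hFk_int k).norm (by simp) measurableSet_Ioc this
      _ = Real.pi * (|x|^(2*k) / ((Nat.factorial (2*k)) : ℝ)) := by
          simp [Real.volume_Ioc, hπ]
  have hsum : Summable fun k => ∫ θ in Ioc (0:ℝ) Real.pi, ‖F k θ‖ := by
    apply Summable.of_nonneg_of_le (fun k => by positivity) hbound
    apply Summable.mul_left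
    have : Summable fun n : ℕ => |x|^n / ((Nat.factorial n) : ℝ) := Real.summable_pow_div_factorial _
    exact this.comp_injective (fun a b hab => by omega)
  have hswap := MeasureTheory.integral_tsum_of_summable_integral_norm hFk_int hsum
  have : (∫ θ in Ioc (0:ℝ) Real.pi, Real.cos (x * Real.sin θ))
      = ∑' k, ∫ θ in Ioc (0:ℝ) Real.pi, F k θ := by
    rw [hswap]
    apply setIntegral_congr_fun measurableSet_Ioc
    intro θ _
    exact hcos θ
  rw [this, ← tsum_mul_left]
  apply tsum_congr
  intro k
  have hterm : (∫ θ in Ioc (0:ℝ) Real.pi, F k θ)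
      = (-1)^k * x^(2*k) / ((Nat.factorial (2*k)) : ℝ) * (Real.pi * ((Nat.factorial (2*k)) : ℝ) / (4^k * ((Nat.factorial k) : ℝ)^2)) := by
    have : (∫ θ in Ioc (0:ℝ) Real.pi, F k θ)
        = (-1)^k * x^(2*k) / ((Nat.factorial (2*k)) : ℝ) * ∫ θ in Ioc (0:ℝ) Real.pi, Real.sin θ ^ (2*k) := by
      rw [← MeasureTheory.integral_const_mul]
      apply setIntegral_congr_fun measurableSet_Ioc
      intro θ _
      rw [hF]
      simp only [mul_pow]
      ring
    rw [this, ← intervalIntegral.integral_of_le hπ, integral_sin_pow_even' k]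
  rw [hterm]
  have h2k : ((Nat.factorial (2*k)) : ℝ) ≠ 0 := Nat.cast_ne_zero.mpr (Nat.factorial_ne_zero _)
  have hkk : ((Nat.factorial k) : ℝ) ≠ 0 := Nat.cast_ne_zero.mpr (Nat.factorial_ne_zero _)
  have hπ' : Real.pi ≠ 0 := Real.pi_ne_zero
  field_simp


/-- Integrability of `s ↦ s e^{-cs}` on `(0,∞)`. -/
lemma integrableOn_s_exp {c : ℝ} (hc : 0 < c) :
    IntegrableOn (fun s : ℝ => s * Real.exp (-(c*s))) (Ioi 0) := by
  have hg : IntegrableOn (fun s : ℝ => (2/c) * Real.exp (-(c/2) * s)) (Ioi 0) :=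
    (exp_neg_integrableOn_Ioi 0 (half_pos hc)).const_mul _
  apply hg.mono' (Continuous.aestronglyMeasurable (by fun_prop))
  filter_upwards [ae_restrict_mem measurableSet_Ioi] with s hs
  rw [Real.norm_eq_abs, abs_of_nonneg (mul_nonneg (le_of_lt hs) (Real.exp_pos _).le)]
  have h1 : s ≤ (2/c) * Real.exp ((c/2) * s) := by
    have h2 : (c/2) * s + 1 ≤ Real.exp ((c/2) * s) := Real.add_one_le_exp _
    have h3 : (c/2) * s ≤ Real.exp ((c/2) * s) := by nlinarith [Real.exp_pos ((c/2)*s)]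
    calc s = (2/c) * ((c/2) * s) := by field_simp
      _ ≤ (2/c) * Real.exp ((c/2) * s) := by
          apply mul_le_mul_of_nonneg_left h3 (by positivity)
  calc s * Real.exp (-(c*s)) ≤ ((2/c) * Real.exp ((c/2)*s)) * Real.exp (-(c*s)) := by
        apply mul_le_mul_of_nonneg_right h1 (Real.exp_pos _).le
    _ = (2/c) * Real.exp (-(c/2) * s) := by
        rw [mul_assoc, ← Real.exp_add]; ring_nf

/-- `∫₀^∞ s e^{-cs} ds = 1/c²`. -/
lemma integral_s_exp {c : ℝ} (hc : 0 < c) :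
    (∫ s in Ioi (0:ℝ), s * Real.exp (-(c*s))) = 1/c^2 := by
  have h := Real.integral_rpow_mul_exp_neg_mul_Ioi (a := 2) (by norm_num) hc
  have h2 : ∀ s ∈ Ioi (0:ℝ), s ^ ((2:ℝ) - 1) * Real.exp (-(c*s)) = s * Real.exp (-(c*s)) := by
    intro s hs
    rw [show ((2:ℝ)-1) = 1 by norm_num, Real.rpow_one]
  rw [setIntegral_congr_fun measurableSet_Ioi h2] at h
  rw [h, Real.Gamma_two, mul_one, Real.rpow_two, div_pow, one_pow]

/-- `∫₀^∞ u^{2k+1} e^{-su²} du = k! / (2 s^{k+1})`. -/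
lemma moment_gaussian {s : ℝ} (hs : 0 < s) (k : ℕ) :
    (∫ u in Ioi (0:ℝ), u^(2*k+1) * Real.exp (-(s*u^2)))
      = ((Nat.factorial k) : ℝ) / (2 * s^(k+1)) := by
  have key := integral_comp_rpow_Ioi_of_pos
      (g := fun y => y^k * Real.exp (-(s*y)) / 2) (p := 2) two_pos
  have h2 : ∀ x ∈ Ioi (0:ℝ),
      ((2:ℝ) * x ^ ((2:ℝ) - 1)) • ((x ^ (2:ℝ))^k * Real.exp (-(s * x ^ (2:ℝ))) / 2)
        = x^(2*k+1) * Real.exp (-(s*x^2)) := by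
    intro x hx
    rw [show ((2:ℝ) - 1) = 1 by norm_num, Real.rpow_one,
      show (x:ℝ) ^ (2:ℝ) = x^2 by rw [← Real.rpow_natCast x 2]; norm_num]
    simp only [smul_eq_mul]
    rw [← pow_mul]
    ring
  rw [setIntegral_congr_fun measurableSet_Ioi h2] at key
  rw [key]
  have h3 : ∀ y ∈ Ioi (0:ℝ), y^k * Real.exp (-(s*y)) / 2
      = (y ^ (((k:ℝ)+1) - 1) * Real.exp (-(s*y))) / 2 := by
    intro y hy
    rw [show ((k:ℝ)+1) - 1 = (k:ℝ) by ring, Real.rpow_natCast]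
  rw [setIntegral_congr_fun measurableSet_Ioi h3, integral_div,
    Real.integral_rpow_mul_exp_neg_mul_Ioi (by positivity) hs,
    Real.Gamma_nat_eq_factorial k]
  rw [show ((k:ℝ)+1) = ((k+1 : ℕ) : ℝ) by push_cast; ring, Real.rpow_natCast]
  have hs' : s ≠ 0 := hs.ne'
  rw [div_pow, one_pow]
  ring

/-- The Hankel-type transform of a Gaussian. -/
lemma hankel_gaussian (h : ℝ) {s : ℝ} (hs : 0 < s) :
    (∫ u in Ioi (0:ℝ), u * besselJ0 (u*h) * Real.exp (-(s*u^2)))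
      = Real.exp (-(h^2/(4*s))) / (2*s) := by
  set c : ℕ → ℝ := fun k => (-1)^k * h^(2*k) / (4^k * ((Nat.factorial k) : ℝ)^2) with hc
  set G : ℕ → ℝ → ℝ := fun k u => c k * (u^(2*k+1) * Real.exp (-(s*u^2))) with hG
  have hpt : ∀ u : ℝ, u * besselJ0 (u*h) * Real.exp (-(s*u^2)) = ∑' k, G k u := by
    intro u
    rw [besselJ0_eq_tsum (u*h), ← tsum_mul_left, ← tsum_mul_right]
    apply tsum_congr
    intro k
    rw [hG, hc]
    simp only [mul_pow]
    ring
  have hint : ∀ k : ℕ, IntegrableOn (fun u => u^(2*k+1) * Real.exp (-(s*u^2))) (Ioi 0) := by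
    intro k
    have h0 := integrableOn_rpow_mul_exp_neg_mul_sq hs
      (s := ((2*k+1 : ℕ) : ℝ))
      (lt_of_lt_of_le (by norm_num : (-1:ℝ) < 0) (Nat.cast_nonneg _))
    apply h0.congr_fun ?_ measurableSet_Ioi
    intro x hx
    simp only [Real.rpow_natCast, neg_mul]
  have hGint : ∀ k : ℕ, IntegrableOn (G k) (Ioi 0) := fun k => (hint k).const_mul _
  have hGval : ∀ k : ℕ, (∫ u in Ioi (0:ℝ), G k u)
      = c k * (((Nat.factorial k) : ℝ) / (2 * s^(k+1))) := by
    intro k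
    rw [hG]
    simp only []
    rw [MeasureTheory.integral_const_mul, moment_gaussian hs k]
  have habs : ∀ k : ℕ, (∫ u in Ioi (0:ℝ), ‖G k u‖)
      = (h^2/(4*s))^k / ((Nat.factorial k) : ℝ) * (1/(2*s)) := by
    intro k
    have he : ∀ u ∈ Ioi (0:ℝ), ‖G k u‖
        = (h^2)^k / (4^k * ((Nat.factorial k) : ℝ)^2) * (u^(2*k+1) * Real.exp (-(s*u^2))) := by
      intro u hu
      have hu0 : (0:ℝ) < u := hu
      have hck : |c k| = (h^2)^k / (4^k * ((Nat.factorial k):ℝ)^2) := by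
        rw [hc]
        simp only []
        rw [abs_div, abs_mul, abs_pow, abs_pow, abs_neg, abs_one, one_pow, one_mul,
          abs_of_pos (by positivity : (0:ℝ) < 4^k * ((Nat.factorial k):ℝ)^2),
          pow_mul, sq_abs]
      rw [hG]
      simp only []
      rw [Real.norm_eq_abs, abs_mul, hck,
        abs_of_pos (mul_pos (pow_pos hu0 _) (Real.exp_pos _))]
    rw [setIntegral_congr_fun measurableSet_Ioi he, MeasureTheory.integral_const_mul,
      moment_gaussian hs k]
    have hf : ((Nat.factorial k) : ℝ) ≠ 0 := Nat.cast_ne_zero.mpr (Nat.factorial_ne_zero _)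
    have hs' : s ≠ 0 := hs.ne'
    rw [div_pow, mul_pow]
    field_simp
    ring
  have hsumm : Summable fun k => ∫ u in Ioi (0:ℝ), ‖G k u‖ := by
    apply Summable.congr ((Real.summable_pow_div_factorial (h^2/(4*s))).mul_right (1/(2*s)))
    intro k
    rw [habs k]
  have hswap := MeasureTheory.integral_tsum_of_summable_integral_norm hGint hsumm
  calc (∫ u in Ioi (0:ℝ), u * besselJ0 (u*h) * Real.exp (-(s*u^2)))
      = ∫ u in Ioi (0:ℝ), ∑' k, G k u := by
        apply setIntegral_congr_fun measurableSet_Ioi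
        intro u _
        exact hpt u
    _ = ∑' k, ∫ u in Ioi (0:ℝ), G k u := hswap.symm
    _ = ∑' k, (-(h^2/(4*s)))^k / ((Nat.factorial k) : ℝ) * (1/(2*s)) := by
        apply tsum_congr
        intro k
        rw [hGval k, hc]
        have hf : ((Nat.factorial k) : ℝ) ≠ 0 := Nat.cast_ne_zero.mpr (Nat.factorial_ne_zero _)
        have hs' : s ≠ 0 := hs.ne'
        rw [neg_pow (h^2/(4*s)) k, div_pow, mul_pow]
        rw [show (h^2)^k = h^(2*k) by rw [← pow_mul]]
        field_simp
        ring
    _ = Real.exp (-(h^2/(4*s))) / (2*s) := by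
        rw [tsum_mul_right]
        rw [show Real.exp (-(h^2/(4*s))) = ∑' n : ℕ, (-(h^2/(4*s)))^n / (Nat.factorial n) by
          rw [Real.exp_eq_exp_ℝ, NormedSpace.exp_eq_tsum_div]]
        rw [mul_one_div]

/-- `cosh t ≥ 1 + t²/2`. -/
lemma one_add_sq_half_le_cosh (t : ℝ) : 1 + t^2/2 ≤ Real.cosh t := by
  rw [Real.cosh_eq_tsum]
  have hsum := (Real.hasSum_cosh t).summable
  have h2 := Summable.sum_le_tsum (Finset.range 2)
    (fun i _ => by
      apply div_nonneg _ (by positivity)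
      exact (even_two_mul i).pow_nonneg t) hsum
  calc 1 + t^2/2 = ∑ i ∈ Finset.range 2, t^(2*i) / ((Nat.factorial (2*i)) : ℝ) := by
        rw [Finset.sum_range_succ, Finset.sum_range_one]
        norm_num [Nat.factorial]
    _ ≤ _ := h2

/-- `exp(-(h cosh t)) eᵗ` is integrable on ℝ. -/
lemma integrable_exp_neg_cosh_mul_exp {h : ℝ} (hh : 0 < h) :
    Integrable (fun t : ℝ => Real.exp (-(h * Real.cosh t)) * Real.exp t) := by
  have hg : Integrable (fun t : ℝ =>
      (Real.exp (-h) * Real.exp (1/(2*h))) * Real.exp (-(h/2) * (t - 1/h)^2)) :=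
    ((integrable_exp_neg_mul_sq (half_pos hh)).comp_sub_right (1/h)).const_mul _
  apply hg.mono' (Continuous.aestronglyMeasurable (by fun_prop))
  filter_upwards with t
  rw [Real.norm_eq_abs, abs_of_nonneg (by positivity)]
  rw [← Real.exp_add, ← Real.exp_add, ← Real.exp_add]
  apply Real.exp_le_exp.mpr
  have hkey : (-h + 1/(2*h)) + (-(h/2) * (t - 1/h)^2) = -h - (h/2)*t^2 + t := by
    field_simp
    ring
  rw [hkey]
  have hb := one_add_sq_half_le_cosh t
  nlinarith [mul_le_mul_of_nonneg_left hb hh.le]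

/-- `exp(-(h cosh t)) cosh t` is integrable on ℝ. -/
lemma integrable_exp_neg_cosh_mul_cosh {h : ℝ} (hh : 0 < h) :
    Integrable (fun t : ℝ => Real.exp (-(h * Real.cosh t)) * Real.cosh t) := by
  have h1 := integrable_exp_neg_cosh_mul_exp hh
  have h2 : Integrable (fun t : ℝ => Real.exp (-(h * Real.cosh t)) * Real.exp (-t)) := by
    have h3 := h1.comp_neg
    apply h3.congr
    filter_upwards with t
    simp [Real.cosh_neg]
  apply ((h1.add h2).div_const 2).congr
  filter_upwards with t
  have hc2 : Real.exp t + Real.exp (-t) = 2 * Real.cosh t := by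
    rw [Real.cosh_eq]; ring
  simp only [Pi.add_apply]
  linear_combination (Real.exp (-(h * Real.cosh t)) / 2) * hc2

/-- Key substitution: `∫₀^∞ e^{-(s + h²/(4s))} ds = h K₁(h)`. -/
lemma integral_exp_sub_eq_besselK (h : ℝ) (hh : 0 < h) :
    (∫ s in Ioi (0:ℝ), Real.exp (-(s + h^2/(4*s)))) = h * besselK 1 h := by
  have hne : (h/2 : ℝ) ≠ 0 := by positivity
  set f : ℝ → ℝ := fun t => (h/2) * Real.exp t with hf
  have himg : f '' (Set.univ : Set ℝ) = Ioi (0:ℝ) := by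
    ext x
    constructor
    · rintro ⟨t, -, rfl⟩
      exact mul_pos (by positivity) (Real.exp_pos t)
    · intro hx
      refine ⟨Real.log (x / (h/2)), trivial, ?_⟩
      rw [hf]
      simp only []
      rw [Real.exp_log (div_pos hx (by positivity))]
      field_simp
  have hderiv : ∀ t ∈ (Set.univ : Set ℝ),
      HasDerivWithinAt f ((h/2) * Real.exp t) Set.univ t :=
    fun t _ => ((Real.hasDerivAt_exp t).const_mul (h/2)).hasDerivWithinAt
  have hinj : Set.InjOn f Set.univ := by
    intro a _ b _ hab
    exact Real.exp_injective (mul_left_cancel₀ hne hab)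
  have hchg := integral_image_eq_integral_abs_deriv_smul MeasurableSet.univ hderiv hinj
    (fun s => Real.exp (-(s + h^2/(4*s))))
  rw [himg] at hchg
  rw [hchg, Measure.restrict_univ]
  have hpt : ∀ t : ℝ, |(h/2) * Real.exp t| • Real.exp (-(f t + h^2/(4 * f t)))
      = (h/2) * (Real.exp (-(h * Real.cosh t)) * Real.exp t) := by
    intro t
    have het := Real.exp_pos t
    rw [abs_of_pos (by positivity), smul_eq_mul, hf]
    simp only []
    have harg : (h/2) * Real.exp t + h^2/(4 * ((h/2) * Real.exp t)) = h * Real.cosh t := by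
      rw [Real.cosh_eq, Real.exp_neg]
      field_simp
      ring
    rw [harg]
    ring
  rw [integral_congr_ae (Filter.Eventually.of_forall hpt), MeasureTheory.integral_const_mul]
  have h1 := integrable_exp_neg_cosh_mul_exp hh
  have h2 : Integrable (fun t : ℝ => Real.exp (-(h * Real.cosh t)) * Real.exp (-t)) := by
    have h3 := h1.comp_neg
    apply h3.congr
    filter_upwards with t
    simp [Real.cosh_neg]
  have hA : (∫ t : ℝ, Real.exp (-(h * Real.cosh t)) * Real.exp t)
      = ∫ t : ℝ, Real.exp (-(h * Real.cosh t)) * Real.exp (-t) := by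
    rw [← integral_neg_eq_self (fun t : ℝ => Real.exp (-(h * Real.cosh t)) * Real.exp t)]
    apply integral_congr_ae
    filter_upwards with t
    rw [Real.cosh_neg]
  have h2A : (2:ℝ) * (∫ t : ℝ, Real.exp (-(h * Real.cosh t)) * Real.exp t)
      = 2 * (∫ t : ℝ, Real.exp (-(h * Real.cosh t)) * Real.cosh t) := by
    calc (2:ℝ) * (∫ t : ℝ, Real.exp (-(h * Real.cosh t)) * Real.exp t)
        = (∫ t : ℝ, Real.exp (-(h * Real.cosh t)) * Real.exp t)
          + ∫ t : ℝ, Real.exp (-(h * Real.cosh t)) * Real.exp (-t) := by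
          rw [← hA]; ring
      _ = ∫ t : ℝ, (Real.exp (-(h * Real.cosh t)) * Real.exp t
          + Real.exp (-(h * Real.cosh t)) * Real.exp (-t)) := (integral_add h1 h2).symm
      _ = 2 * (∫ t : ℝ, Real.exp (-(h * Real.cosh t)) * Real.cosh t) := by
          rw [← MeasureTheory.integral_const_mul]
          apply integral_congr_ae
          filter_upwards with t
          have hc2 : Real.exp t + Real.exp (-t) = 2 * Real.cosh t := by
            rw [Real.cosh_eq]; ring
          linear_combination (Real.exp (-(h * Real.cosh t))) * hc2
  have hIoi : (∫ t : ℝ, Real.exp (-(h * Real.cosh t)) * Real.cosh t)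
      = 2 * ∫ t in Ioi (0:ℝ), Real.exp (-(h * Real.cosh t)) * Real.cosh t := by
    rw [← integral_comp_abs (f := fun t => Real.exp (-(h * Real.cosh t)) * Real.cosh t)]
    apply integral_congr_ae
    filter_upwards with t
    rw [Real.cosh_abs]
  have hK : besselK 1 h = ∫ t in Ioi (0:ℝ), Real.exp (-(h * Real.cosh t)) * Real.cosh t := by
    unfold besselK
    apply setIntegral_congr_fun measurableSet_Ioi
    intro t _
    simp only [one_mul, neg_mul]
  have hfin : (∫ t : ℝ, Real.exp (-(h * Real.cosh t)) * Real.exp t) = 2 * besselK 1 h := by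
    have := h2A
    rw [hIoi, ← hK] at this
    linarith
  rw [hfin]
  ring


/-- Integrability of the dominating kernel on the product space. -/
lemma integrableB :
    Integrable (fun p : ℝ × ℝ => p.1 * (p.2 * Real.exp (-((1+p.1^2) * p.2))))
      ((volume.restrict (Ioi (0:ℝ))).prod (volume.restrict (Ioi (0:ℝ)))) := by
  have hmeas : AEStronglyMeasurable
      (fun p : ℝ × ℝ => p.1 * (p.2 * Real.exp (-((1+p.1^2) * p.2))))
      ((volume.restrict (Ioi (0:ℝ))).prod (volume.restrict (Ioi (0:ℝ)))) :=
    Continuous.aestronglyMeasurable (by fun_prop)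
  rw [MeasureTheory.integrable_prod_iff hmeas]
  constructor
  · filter_upwards with u
    exact (integrableOn_s_exp (by positivity : (0:ℝ) < 1 + u^2)).const_mul u
  · have g0int : Integrable (fun u : ℝ => u * (1/(1+u^2)^2))
        (volume.restrict (Ioi (0:ℝ))) := by
      apply (integrable_inv_one_add_sq.restrict (s := Ioi 0)).mono'
      · apply Continuous.aestronglyMeasurable
        apply continuous_id.mul
        apply Continuous.div continuous_const (by fun_prop)
        intro u
        positivity
      · filter_upwards with u
        rw [Real.norm_eq_abs, abs_mul, abs_of_pos (by positivity : (0:ℝ) < 1/(1+u^2)^2)]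
        have h1 : |u| ≤ 1 + u^2 := by nlinarith [abs_nonneg u, sq_abs u]
        calc |u| * (1/(1+u^2)^2) ≤ (1+u^2) * (1/(1+u^2)^2) := by
              apply mul_le_mul_of_nonneg_right h1 (by positivity)
          _ = (1+u^2)⁻¹ := by
              have h0 : (1:ℝ)+u^2 ≠ 0 := by positivity
              field_simp
    apply g0int.congr
    filter_upwards [ae_restrict_mem measurableSet_Ioi] with u hu
    have hu0 : (0:ℝ) < u := hu
    have hnorm : ∀ s ∈ Ioi (0:ℝ), u * (s * Real.exp (-((1+u^2) * s)))
        = ‖u * (s * Real.exp (-((1+u^2) * s)))‖ := by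
      intro s hs
      rw [Real.norm_eq_abs, abs_of_nonneg]
      have : (0:ℝ) < s := hs
      positivity
    rw [← setIntegral_congr_fun measurableSet_Ioi hnorm, MeasureTheory.integral_const_mul,
      integral_s_exp (by positivity : (0:ℝ) < 1+u^2)]

end Aux

/-- Two-dimensional Spartan covariance, case `η₁ = 2`:
`∫₀^∞ u J₀(uh)/(1+u²)² du = (h/2) K₁(h)`, hence
`C(h) = η₀ h K₁(h)/(4π)`. -/
theorem spartan_covariance_eta1_eq_two (h : ℝ) (hh : 0 < h) :
    (∫ u in Set.Ioi (0:ℝ), u * besselJ0 (u * h) / (1 + u ^ 2) ^ 2)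
      = (h / 2) * besselK 1 h ∧
    ∀ η0 : ℝ, 0 < η0 →
      (η0 / (2 * Real.pi)) *
          (∫ u in Set.Ioi (0:ℝ), u * besselJ0 (u * h) / (1 + 2 * u ^ 2 + u ^ 4))
        = η0 * h * besselK 1 h / (4 * Real.pi) := by
  have hGcont : Continuous (fun p : ℝ × ℝ =>
      p.1 * besselJ0 (p.1 * h) * (p.2 * Real.exp (-((1+p.1^2) * p.2)))) := by
    apply Continuous.mul
    · exact continuous_fst.mul (besselJ0_continuous.comp (continuous_fst.mul continuous_const))
    · fun_prop
  have hGint : Integrable (fun p : ℝ × ℝ =>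
      p.1 * besselJ0 (p.1 * h) * (p.2 * Real.exp (-((1+p.1^2) * p.2))))
      ((volume.restrict (Set.Ioi (0:ℝ))).prod (volume.restrict (Set.Ioi (0:ℝ)))) := by
    apply integrableB.mono' hGcont.aestronglyMeasurable
    rw [Measure.prod_restrict]
    filter_upwards [ae_restrict_mem (measurableSet_Ioi.prod measurableSet_Ioi)] with p hp
    obtain ⟨hp1, hp2⟩ := hp
    have hp1' : (0:ℝ) < p.1 := hp1
    have hp2' : (0:ℝ) < p.2 := hp2
    rw [Real.norm_eq_abs, abs_mul, abs_mul,
      abs_of_pos hp1', abs_of_pos (mul_pos hp2' (Real.exp_pos _))]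
    calc p.1 * |besselJ0 (p.1*h)| * (p.2 * Real.exp (-((1+p.1^2) * p.2)))
        ≤ p.1 * 1 * (p.2 * Real.exp (-((1+p.1^2) * p.2))) := by
          have hb := abs_besselJ0_le_one (p.1*h)
          have hpos : (0:ℝ) ≤ p.2 * Real.exp (-((1+p.1^2) * p.2)) := by positivity
          apply mul_le_mul_of_nonneg_right _ hpos
          apply mul_le_mul_of_nonneg_left hb hp1'.le
      _ = p.1 * (p.2 * Real.exp (-((1+p.1^2) * p.2))) := by ring
  have part1 : (∫ u in Set.Ioi (0:ℝ), u * besselJ0 (u * h) / (1 + u ^ 2) ^ 2)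
      = (h / 2) * besselK 1 h := by
    calc (∫ u in Set.Ioi (0:ℝ), u * besselJ0 (u * h) / (1 + u ^ 2) ^ 2)
        = ∫ u in Set.Ioi (0:ℝ), ∫ s in Set.Ioi (0:ℝ),
            u * besselJ0 (u*h) * (s * Real.exp (-((1+u^2)*s))) := by
          apply setIntegral_congr_fun measurableSet_Ioi
          intro u _
          dsimp only
          rw [MeasureTheory.integral_const_mul, integral_s_exp
            (by positivity : (0:ℝ) < 1+u^2), mul_one_div]
      _ = ∫ s in Set.Ioi (0:ℝ), ∫ u in Set.Ioi (0:ℝ),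
            u * besselJ0 (u*h) * (s * Real.exp (-((1+u^2)*s))) :=
          MeasureTheory.integral_integral_swap hGint
      _ = ∫ s in Set.Ioi (0:ℝ), Real.exp (-(s + h^2/(4*s))) / 2 := by
          apply setIntegral_congr_fun measurableSet_Ioi
          intro s hs
          dsimp only
          have hs0 : (0:ℝ) < s := hs
          have h4 : (∫ u in Set.Ioi (0:ℝ),
              u * besselJ0 (u*h) * (s * Real.exp (-((1+u^2)*s))))
              = (s * Real.exp (-s)) * ∫ u in Set.Ioi (0:ℝ),
                  u * besselJ0 (u*h) * Real.exp (-(s*u^2)) := by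
            rw [← MeasureTheory.integral_const_mul]
            apply setIntegral_congr_fun measurableSet_Ioi
            intro u _
            dsimp only
            rw [show -((1+u^2)*s) = (-s) + (-(s*u^2)) by ring, Real.exp_add]
            ring
          rw [h4, hankel_gaussian h hs0,
            show -(s + h^2/(4*s)) = (-s) + (-(h^2/(4*s))) by ring, Real.exp_add]
          field_simp
      _ = (h / 2) * besselK 1 h := by
          rw [integral_div, integral_exp_sub_eq_besselK h hh]
          ring
  refine ⟨part1, ?_⟩
  intro η0 hη0
  have heq : (∫ u in Set.Ioi (0:ℝ), u * besselJ0 (u * h) / (1 + 2 * u ^ 2 + u ^ 4))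
      = (h / 2) * besselK 1 h := by
    rw [← part1]
    apply setIntegral_congr_fun measurableSet_Ioi
    intro u _
    dsimp only
    rw [show (1:ℝ) + 2*u^2 + u^4 = (1+u^2)^2 by ring]
  rw [heq]
  field_simp
  ring
end

section
/- For every integer d with 1 ≤ d ≤ 3, every η1 > −2, and every ξ > 0, the function k ↦ k^{d−1}/(1 + η1·(kξ)² + (kξ)⁴) is integrable on (0, ∞). Hence the SSRF spectral density with infinite cutoff satisfies the integrability condition of the Bochner–Khinchin permissibility theorem in dimensions d = 1, 2, 3. -/
open MeasureTheory

/-- Integrability of the SSRF spectral density with infinite cutoff in dimensions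
`d = 1, 2, 3`: the function `k ↦ k^(d−1)/(1 + η₁ (kξ)² + (kξ)⁴)` is integrable
on `(0,∞)`, so the Bochner–Khinchin integrability condition holds. -/
theorem ssrf_spectral_density_integrable (d : ℕ) (hd1 : 1 ≤ d) (hd3 : d ≤ 3)
    (η1 ξ : ℝ) (hη : -2 < η1) (hξ : 0 < ξ) :
    IntegrableOn (fun k : ℝ => k ^ (d - 1) / (1 + η1 * (k * ξ) ^ 2 + (k * ξ) ^ 4))
      (Set.Ioi 0) := by
  set ε : ℝ := min 1 ((2 + η1) / 2) with hε
  have hεpos : 0 < ε := lt_min one_pos (by linarith)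
  -- lower bound on denominator
  have hden : ∀ u : ℝ, ε * (1 + u ^ 4) ≤ 1 + η1 * u ^ 2 + u ^ 4 := by
    intro u
    have h1 : ε ≤ 1 := min_le_left _ _
    have h2 : ε ≤ (2 + η1) / 2 := min_le_right _ _
    nlinarith [sq_nonneg (1 - u ^ 2), sq_nonneg u, sq_nonneg (u ^ 2)]
  have hdenpos : ∀ u : ℝ, 0 < 1 + η1 * u ^ 2 + u ^ 4 := by
    intro u
    have := hden u
    nlinarith [sq_nonneg (u ^ 2)]
  have hcont : Continuous fun k : ℝ =>
      k ^ (d - 1) / (1 + η1 * (k * ξ) ^ 2 + (k * ξ) ^ 4) := by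
    apply Continuous.div (by continuity) (by continuity)
    intro k
    exact (hdenpos (k * ξ)).ne'
  have hsplit : Set.Ioi (0 : ℝ) = Set.Ioc 0 1 ∪ Set.Ioi 1 := by
    rw [Set.Ioc_union_Ioi_eq_Ioi]; norm_num
  rw [hsplit]
  apply IntegrableOn.union
  · exact hcont.integrableOn_Ioc
  · -- bound by C * k ^ (-2) on Ioi 1
    have hbase : IntegrableOn (fun k : ℝ => k ^ (-2 : ℝ)) (Set.Ioi 1) :=
      integrableOn_Ioi_rpow_of_lt (by norm_num) one_pos
    apply Integrable.mono' (hbase.const_mul ((ε * ξ ^ 4)⁻¹))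
    · exact hcont.aestronglyMeasurable.restrict
    · filter_upwards [ae_restrict_mem measurableSet_Ioi] with k hk
      have hk1 : (1 : ℝ) ≤ k := le_of_lt hk
      have hk0 : (0 : ℝ) < k := lt_of_lt_of_le one_pos hk1
      have hnum : k ^ (d - 1) ≤ k ^ 2 := by
        apply pow_le_pow_right₀ hk1
        omega
      have hnum0 : (0 : ℝ) ≤ k ^ (d - 1) := pow_nonneg hk0.le _
      have hd2 : ε * ξ ^ 4 * k ^ 4 ≤ 1 + η1 * (k * ξ) ^ 2 + (k * ξ) ^ 4 := by
        have := hden (k * ξ)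
        nlinarith [hεpos.le, pow_pos hξ 4]
      have hd2pos : (0 : ℝ) < ε * ξ ^ 4 * k ^ 4 := by positivity
      rw [Real.norm_eq_abs, abs_of_nonneg (div_nonneg hnum0 (hdenpos (k * ξ)).le)]
      calc k ^ (d - 1) / (1 + η1 * (k * ξ) ^ 2 + (k * ξ) ^ 4)
          ≤ k ^ 2 / (ε * ξ ^ 4 * k ^ 4) :=
            div_le_div₀ (by positivity) hnum hd2pos hd2
        _ = (ε * ξ ^ 4)⁻¹ * k ^ (-2 : ℝ) := by
            rw [Real.rpow_neg hk0.le, Real.rpow_two]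
            field_simp
end

section
/- Let η1 > 2, 0 < α < 1, ξ > 0, and set Δ = √(η1² − 4). Then ∫₀^∞ x^{1+2α}/(1 + η1·ξ²·x² + ξ⁴·x⁴) dx = ξ^{−2−2α}·Γ(1−α)·Γ(1+α)·((η1 + Δ)^α − (η1 − Δ)^α)/(2^{α+1}·α·Δ). (This is the value of the integral I_α(φ) in the correlation-spectrum computation of Proposition 3 for η1 > 2.) -/
open MeasureTheory Real Set

lemma aux_beta {α : ℝ} (hα0 : 0 < α) (hα1 : α < 1) :
    ∫ t in Ioc (0:ℝ) 1, t ^ (α - 1) * (1 - t) ^ (-α) = Real.Gamma α * Real.Gamma (1 - α) := by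
  have h1 : Complex.Gamma α * Complex.Gamma (1 - (α:ℂ)) = Complex.betaIntegral α (1 - α) := by
    have := Complex.Gamma_mul_Gamma_eq_betaIntegral (s := (α:ℂ)) (t := 1 - (α:ℂ))
      (by simpa using hα0) (by simpa using sub_pos.mpr hα1)
    simpa [Complex.Gamma_one] using this
  have h2 : ((∫ t in Ioc (0:ℝ) 1, t ^ (α - 1) * (1 - t) ^ (-α) : ℝ) : ℂ)
      = ∫ x in Ioc (0:ℝ) 1, (x:ℂ) ^ ((α:ℂ) - 1) * (1 - (x:ℂ)) ^ (1 - (α:ℂ) - 1) := by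
    refine integral_ofReal.symm.trans <| setIntegral_congr_fun measurableSet_Ioc fun x hx => ?_
    simp_rw [RCLike.ofReal_mul, Complex.coe_algebraMap]
    rw [Complex.ofReal_cpow hx.1.le, Complex.ofReal_cpow (by linarith [hx.2] : (0:ℝ) ≤ 1 - x)]
    push_cast
    ring_nf
  have h3 : Complex.betaIntegral α (1 - α)
      = ∫ x in Ioc (0:ℝ) 1, (x:ℂ) ^ ((α:ℂ) - 1) * (1 - (x:ℂ)) ^ (1 - (α:ℂ) - 1) := by
    rw [Complex.betaIntegral, intervalIntegral.integral_of_le zero_le_one]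
  have := h1.trans (h3.trans h2.symm)
  rw [← Complex.ofReal_one, ← Complex.ofReal_sub, Complex.Gamma_ofReal, Complex.Gamma_ofReal,
    ← Complex.ofReal_mul] at this
  exact_mod_cast this.symm

lemma aux_mellin_one {α : ℝ} (hα0 : 0 < α) (hα1 : α < 1) :
    ∫ x in Ioi (0:ℝ), x ^ (α - 1) / (1 + x) = Real.Gamma α * Real.Gamma (1 - α) := by
  have himg : (fun t : ℝ => t / (1 - t)) '' Ioo 0 1 = Ioi 0 := by
    ext y
    constructor
    · rintro ⟨t, ht, rfl⟩
      exact div_pos ht.1 (by linarith [ht.2])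
    · intro hy
      have hy' : (0:ℝ) < y := hy
      have h1y : (0:ℝ) < 1 + y := by linarith
      refine ⟨y / (1 + y), ⟨div_pos hy' h1y, by rw [div_lt_one h1y]; linarith⟩, ?_⟩
      field_simp
      ring
  have hderiv : ∀ t ∈ Ioo (0:ℝ) 1, HasDerivWithinAt (fun t : ℝ => t / (1 - t))
      (((1 - t) ^ 2)⁻¹) (Ioo 0 1) t := by
    intro t ht
    have h1t : (1:ℝ) - t ≠ 0 := by have := ht.2; intro h; linarith [sub_eq_zero.mp h]
    have := (hasDerivAt_id t).div ((hasDerivAt_id t).const_sub 1) h1t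
    refine this.hasDerivWithinAt.congr_deriv ?_
    simp only [id]
    ring
  have hinj : InjOn (fun t : ℝ => t / (1 - t)) (Ioo 0 1) := by
    intro a ha b hb hab
    have h1a : (1:ℝ) - a ≠ 0 := by have := ha.2; intro h; linarith [sub_eq_zero.mp h]
    have h1b : (1:ℝ) - b ≠ 0 := by have := hb.2; intro h; linarith [sub_eq_zero.mp h]
    field_simp at hab
    linarith
  have key := integral_image_eq_integral_abs_deriv_smul measurableSet_Ioo hderiv hinj
    (fun x : ℝ => x ^ (α - 1) / (1 + x))
  rw [himg] at key
  rw [key]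
  rw [← aux_beta hα0 hα1, integral_Ioc_eq_integral_Ioo]
  refine setIntegral_congr_fun measurableSet_Ioo fun t ht => ?_
  have ht0 : (0:ℝ) < t := ht.1
  have ht1 : (0:ℝ) < 1 - t := by linarith [ht.2]
  have habs : |(((1 - t) ^ 2)⁻¹ : ℝ)| = ((1 - t) ^ 2)⁻¹ := abs_of_pos (by positivity)
  have hplus : 1 + t / (1 - t) = (1 - t)⁻¹ := by field_simp; ring
  have hpow : (t / (1 - t)) ^ (α - 1) = t ^ (α - 1) / (1 - t) ^ (α - 1) :=
    Real.div_rpow ht0.le ht1.le (α - 1)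
  have e1 : (((1 - t) ^ 2)⁻¹ : ℝ) = (1 - t) ^ (-2 : ℝ) := by
    rw [← Real.rpow_natCast (1 - t) 2, ← Real.rpow_neg ht1.le]; norm_num
  have e2 : (((1 - t))⁻¹ : ℝ) = (1 - t) ^ (-1 : ℝ) := (Real.rpow_neg_one _).symm
  rw [smul_eq_mul, habs, hpow, hplus, e1, e2, div_div, ← Real.rpow_add ht1,
    mul_comm, div_mul_eq_mul_div, mul_div_assoc, ← Real.rpow_sub ht1]
  congr 1
  ring

lemma aux_integrable {α c : ℝ} (hα0 : 0 < α) (hα1 : α < 1) (hc : 0 < c) :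
    IntegrableOn (fun x : ℝ => x ^ (α - 1) / (x + c)) (Ioi 0) := by
  have hmeas : ∀ s : Set ℝ, s ⊆ Ioi 0 → MeasurableSet s →
      AEStronglyMeasurable (fun x : ℝ => x ^ (α - 1) / (x + c)) (volume.restrict s) := by
    intro s hs hsm
    apply ContinuousOn.aestronglyMeasurable ?_ hsm
    intro x hx
    have hx0 : 0 < x := hs hx
    exact ((Real.continuousAt_rpow_const x _ (Or.inl hx0.ne')).continuousWithinAt.div
      ((continuous_id.add continuous_const).continuousWithinAt) (by positivity))
  have h1 : IntegrableOn (fun x : ℝ => x ^ (α - 1) / (x + c)) (Ioc 0 1) := by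
    have hg : IntegrableOn (fun x : ℝ => c⁻¹ * x ^ (α - 1)) (Ioc 0 1) := by
      refine Integrable.const_mul ?_ _
      have h := intervalIntegral.intervalIntegrable_rpow' (a := 0) (b := 1)
        (by linarith : (-1:ℝ) < α - 1)
      rw [intervalIntegrable_iff_integrableOn_Ioc_of_le zero_le_one] at h
      exact h
    refine Integrable.mono hg (hmeas _ Ioc_subset_Ioi_self measurableSet_Ioc) ?_
    rw [ae_restrict_iff' measurableSet_Ioc]
    filter_upwards with x hx
    have hx0 : 0 < x := hx.1
    have hxc : c ≤ x + c := by linarith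
    rw [norm_mul, norm_div]
    simp only [Real.norm_eq_abs, abs_of_pos hx0, abs_of_pos (by positivity : (0:ℝ) < x ^ (α-1)),
      abs_of_pos (by positivity : (0:ℝ) < x + c), abs_of_pos (inv_pos.mpr hc)]
    rw [div_le_iff₀ (by positivity), mul_comm c⁻¹, mul_assoc]
    have : (1:ℝ) ≤ c⁻¹ * (x + c) := by
      rw [le_inv_mul_iff₀ hc, mul_one]; linarith
    nlinarith [Real.rpow_pos_of_pos hx0 (α - 1)]
  have h2 : IntegrableOn (fun x : ℝ => x ^ (α - 1) / (x + c)) (Ioi 1) := by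
    have hg : IntegrableOn (fun x : ℝ => x ^ (α - 2)) (Ioi 1) :=
      integrableOn_Ioi_rpow_of_lt (by linarith) one_pos
    refine Integrable.mono hg (hmeas _ (fun x hx => lt_trans one_pos (mem_Ioi.mp hx)) measurableSet_Ioi) ?_
    rw [ae_restrict_iff' measurableSet_Ioi]
    filter_upwards with x hx
    have hx1 : (1:ℝ) < x := hx
    have hx0 : (0:ℝ) < x := lt_trans one_pos hx1
    rw [norm_div]
    simp only [Real.norm_eq_abs, abs_of_pos (by positivity : (0:ℝ) < x ^ (α-1)),
      abs_of_pos (by positivity : (0:ℝ) < x + c), abs_of_pos (by positivity : (0:ℝ) < x ^ (α-2))]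
    rw [div_le_iff₀ (by positivity)]
    have e : x ^ (α - 2) * (x + c) = x ^ (α - 2) * x + x ^ (α - 2) * c := by ring
    have e2 : x ^ (α - 2) * x = x ^ (α - 1) := by
      have h := Real.rpow_add hx0 (α - 2) 1
      rw [Real.rpow_one] at h
      rw [← h]
      norm_num
      ring_nf
    nlinarith [Real.rpow_pos_of_pos hx0 (α - 2)]
  have : Ioi (0:ℝ) = Ioc 0 1 ∪ Ioi 1 := (Ioc_union_Ioi_eq_Ioi zero_le_one).symm
  rw [this]
  exact h1.union h2

lemma aux_mellin {α c : ℝ} (hα0 : 0 < α) (hα1 : α < 1) (hc : 0 < c) :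
    ∫ x in Ioi (0:ℝ), x ^ (α - 1) / (x + c)
      = c ^ (α - 1) * (Real.Gamma α * Real.Gamma (1 - α)) := by
  have key := integral_comp_mul_left_Ioi (fun x : ℝ => x ^ (α - 1) / (x + c)) 0 hc
  rw [mul_zero] at key
  have e : ∀ x ∈ Ioi (0:ℝ), (fun x : ℝ => x ^ (α - 1) / (x + c)) (c * x)
      = c ^ (α - 1) * c⁻¹ * (x ^ (α - 1) / (1 + x)) := by
    intro x hx
    have hx0 : (0:ℝ) < x := hx
    simp only
    rw [Real.mul_rpow hc.le hx0.le]
    have : c * x + c = c * (1 + x) := by ring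
    rw [this]
    field_simp
  rw [setIntegral_congr_fun measurableSet_Ioi e, integral_const_mul, aux_mellin_one hα0 hα1,
    smul_eq_mul] at key
  have hc' : (c:ℝ) ≠ 0 := hc.ne'
  field_simp at key
  rw [← key]
  try ring

lemma aux_pf {α a b : ℝ} (hα0 : 0 < α) (hα1 : α < 1) (hb : 0 < b) (hab : b < a) :
    ∫ u in Ioi (0:ℝ), u ^ α / ((u + a) * (u + b))
      = Real.Gamma α * Real.Gamma (1 - α) * (a ^ α - b ^ α) / (a - b) := by
  have ha : 0 < a := lt_trans hb hab
  have e : ∀ u ∈ Ioi (0:ℝ), u ^ α / ((u + a) * (u + b))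
      = (a - b)⁻¹ * (a * (u ^ (α - 1) / (u + a)) - b * (u ^ (α - 1) / (u + b))) := by
    intro u hu
    have hu0 : (0:ℝ) < u := hu
    have hua : (0:ℝ) < u + a := by linarith
    have hub : (0:ℝ) < u + b := by linarith
    have hpow : u ^ α = u ^ (α - 1) * u := by
      have h := Real.rpow_add hu0 (α - 1) 1
      rw [Real.rpow_one] at h
      rw [← h]; norm_num
    rw [hpow]
    have h1 : a - b ≠ 0 := sub_ne_zero.mpr (ne_of_gt hab)
    field_simp [hua.ne', hub.ne', h1]
    ring
  rw [setIntegral_congr_fun measurableSet_Ioi e, integral_const_mul, integral_sub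
    ((aux_integrable hα0 hα1 ha).const_mul a) ((aux_integrable hα0 hα1 hb).const_mul b),
    integral_const_mul, integral_const_mul, aux_mellin hα0 hα1 ha, aux_mellin hα0 hα1 hb]
  have hpa : a * a ^ (α - 1) = a ^ α := by
    have h := Real.rpow_add ha (α - 1) 1
    rw [Real.rpow_one] at h
    rw [mul_comm, ← h]; ring_nf
  have hpb : b * b ^ (α - 1) = b ^ α := by
    have h := Real.rpow_add hb (α - 1) 1
    rw [Real.rpow_one] at h
    rw [mul_comm, ← h]; ring_nf
  have hΔ : a - b ≠ 0 := sub_ne_zero.mpr (ne_of_gt hab)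
  have e1 : a * (a ^ (α - 1) * (Real.Gamma α * Real.Gamma (1 - α)))
      = a ^ α * (Real.Gamma α * Real.Gamma (1 - α)) := by rw [← hpa]; ring
  have e2 : b * (b ^ (α - 1) * (Real.Gamma α * Real.Gamma (1 - α)))
      = b ^ α * (Real.Gamma α * Real.Gamma (1 - α)) := by rw [← hpb]; ring
  rw [e1, e2]
  field_simp

/-- Value of the correlation-spectrum integral `I_α(φ)` for `η₁ > 2`:
`∫₀^∞ x^{1+2α}/(1 + η₁ξ²x² + ξ⁴x⁴) dx
  = ξ^{−2−2α} Γ(1−α) Γ(1+α) ((η₁+Δ)^α − (η₁−Δ)^α)/(2^{α+1} α Δ)`. -/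
theorem ssrf_correlation_integral_eta1_gt_two (η1 α ξ Δ : ℝ)
    (hη : 2 < η1) (hα0 : 0 < α) (hα1 : α < 1) (hξ : 0 < ξ)
    (hΔ : Δ = Real.sqrt (η1 ^ 2 - 4)) :
    (∫ x in Set.Ioi (0:ℝ), x ^ (1 + 2 * α) / (1 + η1 * ξ ^ 2 * x ^ 2 + ξ ^ 4 * x ^ 4))
      = ξ ^ (-2 - 2 * α) * Real.Gamma (1 - α) * Real.Gamma (1 + α)
          * ((η1 + Δ) ^ α - (η1 - Δ) ^ α) / (2 ^ (α + 1) * α * Δ) := by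
  have hη0 : (0:ℝ) < η1 := by linarith
  have hη2 : (0:ℝ) < η1 ^ 2 - 4 := by nlinarith
  have hΔ0 : (0:ℝ) < Δ := by rw [hΔ]; exact Real.sqrt_pos.mpr hη2
  have hΔsq : Δ ^ 2 = η1 ^ 2 - 4 := by rw [hΔ]; exact Real.sq_sqrt hη2.le
  have hΔη : Δ < η1 := by nlinarith
  set a : ℝ := (η1 + Δ) / 2 with ha_def
  set b : ℝ := (η1 - Δ) / 2 with hb_def
  have hb0 : (0:ℝ) < b := by rw [hb_def]; linarith
  have hba : b < a := by rw [ha_def, hb_def]; linarith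
  have ha0 : (0:ℝ) < a := lt_trans hb0 hba
  have hsum : a + b = η1 := by rw [ha_def, hb_def]; ring
  have hab1 : a * b = 1 := by rw [ha_def, hb_def]; nlinarith
  have hξ2 : (0:ℝ) < ξ ^ 2 := pow_pos hξ 2
  set g1 : ℝ → ℝ := fun y => y ^ α / (2 * (1 + η1 * ξ ^ 2 * y + ξ ^ 4 * y ^ 2)) with hg1
  set g2 : ℝ → ℝ := fun u => u ^ α / (1 + η1 * u + u ^ 2) with hg2
  -- Step 1 : substitution y = x²
  have s1 := integral_comp_rpow_Ioi_of_pos (g := g1) (p := (2:ℝ)) two_pos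
  have e1 : ∀ x ∈ Ioi (0:ℝ), ((2:ℝ) * x ^ ((2:ℝ) - 1)) • g1 (x ^ (2:ℝ))
      = x ^ (1 + 2 * α) / (1 + η1 * ξ ^ 2 * x ^ 2 + ξ ^ 4 * x ^ 4) := by
    intro x hx
    have hx0 : (0:ℝ) < x := hx
    have hD : (0:ℝ) < 1 + η1 * ξ ^ 2 * x ^ 2 + ξ ^ 4 * x ^ 4 := by
      have h1 : (0:ℝ) < η1 * ξ ^ 2 * x ^ 2 := by positivity
      have h2 : (0:ℝ) ≤ ξ ^ 4 * x ^ 4 := by positivity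
      linarith
    have hc1 : x ^ ((2:ℝ) - 1) = x := by norm_num
    have hc2 : x ^ (2:ℝ) = x ^ 2 := by
      rw [← Real.rpow_natCast x 2]; norm_num
    have hc3 : (x ^ 2 : ℝ) ^ α = x ^ (2 * α) := by
      rw [← Real.rpow_natCast x 2, ← Real.rpow_mul hx0.le]; norm_num
    have hc4 : x * x ^ (2 * α) = x ^ (1 + 2 * α) := by
      have h := Real.rpow_add hx0 1 (2 * α)
      rw [Real.rpow_one] at h
      exact h.symm
    rw [smul_eq_mul, hc1, hc2, hg1]
    simp only
    rw [hc3]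
    have hc5 : (x ^ 2 : ℝ) ^ 2 = x ^ 4 := by ring
    rw [hc5]
    field_simp [hD.ne']
    nlinarith [hc4, Real.rpow_pos_of_pos hx0 (2*α), Real.rpow_pos_of_pos hx0 (1+2*α)]
  rw [setIntegral_congr_fun measurableSet_Ioi e1] at s1
  -- Step 2 : scaling u = ξ² y
  have s2 := integral_comp_mul_left_Ioi g2 0 hξ2
  rw [mul_zero, smul_eq_mul] at s2
  have e2 : ∀ y ∈ Ioi (0:ℝ), g2 (ξ ^ 2 * y) = (ξ ^ 2) ^ α * (2 * g1 y) := by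
    intro y hy
    have hy0 : (0:ℝ) < y := hy
    have hD : (0:ℝ) < 1 + η1 * ξ ^ 2 * y + ξ ^ 4 * y ^ 2 := by
      have h1 : (0:ℝ) < η1 * ξ ^ 2 * y := by positivity
      have h2 : (0:ℝ) ≤ ξ ^ 4 * y ^ 2 := by positivity
      linarith
    rw [hg1, hg2]
    simp only
    rw [Real.mul_rpow hξ2.le hy0.le]
    have hd : 1 + η1 * (ξ ^ 2 * y) + (ξ ^ 2 * y) ^ 2 = 1 + η1 * ξ ^ 2 * y + ξ ^ 4 * y ^ 2 := by
      ring
    rw [hd]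
    field_simp
  rw [setIntegral_congr_fun measurableSet_Ioi e2, integral_const_mul, integral_const_mul] at s2
  -- Step 3 : partial fractions
  have e3 : ∀ u ∈ Ioi (0:ℝ), g2 u = u ^ α / ((u + a) * (u + b)) := by
    intro u _
    rw [hg2]
    simp only
    have : (u + a) * (u + b) = 1 + η1 * u + u ^ 2 := by
      rw [← hsum, ← hab1]; ring
    rw [this]
  have s3 : ∫ u in Ioi (0:ℝ), g2 u
      = Real.Gamma α * Real.Gamma (1 - α) * (a ^ α - b ^ α) / (a - b) := by
    rw [setIntegral_congr_fun measurableSet_Ioi e3]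
    exact aux_pf hα0 hα1 hb0 hba
  -- Assemble
  have hI : ∫ x in Set.Ioi (0:ℝ), x ^ (1 + 2 * α) / (1 + η1 * ξ ^ 2 * x ^ 2 + ξ ^ 4 * x ^ 4)
      = ((ξ ^ 2) ^ α * 2)⁻¹ * ((ξ ^ 2)⁻¹
          * (Real.Gamma α * Real.Gamma (1 - α) * (a ^ α - b ^ α) / (a - b))) := by
    rw [s1, ← s3, ← s2]
    have hne : ((ξ ^ 2 : ℝ) ^ α) ≠ 0 := (Real.rpow_pos_of_pos hξ2 α).ne'
    field_simp
  rw [hI]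
  -- final arithmetic
  have hΓ : Real.Gamma (1 + α) = α * Real.Gamma α := by
    rw [show (1 + α) = α + 1 by ring, Real.Gamma_add_one hα0.ne']
  have h2a : η1 + Δ = 2 * a := by rw [ha_def]; ring
  have h2b : η1 - Δ = 2 * b := by rw [hb_def]; ring
  have hpa : (η1 + Δ) ^ α = 2 ^ α * a ^ α := by
    rw [h2a, Real.mul_rpow (by norm_num) ha0.le]
  have hpb : (η1 - Δ) ^ α = 2 ^ α * b ^ α := by
    rw [h2b, Real.mul_rpow (by norm_num) hb0.le]
  have hab : a - b = Δ := by rw [ha_def, hb_def]; ring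
  have h2exp : (2:ℝ) ^ (α + 1) = 2 ^ α * 2 := by
    rw [Real.rpow_add two_pos, Real.rpow_one]
  have hξexp : ξ ^ (-2 - 2 * α) = (ξ ^ 2)⁻¹ * ((ξ ^ 2 : ℝ) ^ α)⁻¹ := by
    have e1 : ((ξ ^ 2 : ℝ)) ^ α = ξ ^ (2 * α) := by
      rw [← Real.rpow_natCast ξ 2, ← Real.rpow_mul hξ.le]; norm_num
    have e2 : (ξ ^ 2 : ℝ) = ξ ^ (2:ℝ) := by
      rw [← Real.rpow_natCast ξ 2]; norm_num
    rw [e1, e2, ← Real.rpow_neg hξ.le, ← Real.rpow_neg hξ.le, ← Real.rpow_add hξ]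
    ring_nf
  rw [hΓ, hpa, hpb, hab, h2exp, hξexp]
  have hne1 : ((ξ ^ 2 : ℝ) ^ α) ≠ 0 := (Real.rpow_pos_of_pos hξ2 α).ne'
  have hne2 : ((2:ℝ) ^ α) ≠ 0 := (Real.rpow_pos_of_pos two_pos α).ne'
  field_simp
end

section
/- Let η1 > −2, 0 < α < 1, ξ > 0, and define κ̃₁ = (1/ξ)·√( (√(η1²(1−α)² + 4α(2−α)) − η1(1−α)) / (2(2−α)) ). Then κ̃₁ > 0 and the function f(k) = k^{2α}/(1 + η1·(kξ)² + (kξ)⁴) attains its supremum over (0, ∞) at k = κ̃₁; moreover κ̃₁ is the unique critical point of f on (0, ∞), and f(k) < f(κ̃₁) for every k > 0 with k ≠ κ̃₁. -/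
open MeasureTheory Real

set_option maxHeartbeats 1600000 in
/-- The function `f(k) = k^{2α}/(1 + η₁(kξ)² + (kξ)⁴)` attains its supremum over
`(0,∞)` at the unique critical point
`κ̃₁ = (1/ξ)√((√(η₁²(1−α)² + 4α(2−α)) − η₁(1−α))/(2(2−α)))`, and the maximum is strict. -/
theorem ssrf_spectral_sup_location (η1 α ξ κ : ℝ) (f : ℝ → ℝ)
    (hη : -2 < η1) (hα0 : 0 < α) (hα1 : α < 1) (hξ : 0 < ξ)
    (hκ : κ = (1 / ξ) * Real.sqrt
        ((Real.sqrt (η1 ^ 2 * (1 - α) ^ 2 + 4 * α * (2 - α)) - η1 * (1 - α))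
          / (2 * (2 - α))))
    (hf : f = fun k : ℝ => k ^ (2 * α) / (1 + η1 * (k * ξ) ^ 2 + (k * ξ) ^ 4)) :
    0 < κ ∧
    (∀ k : ℝ, 0 < k → f k ≤ f κ) ∧
    (∀ k : ℝ, 0 < k → (deriv f k = 0 ↔ k = κ)) ∧
    (∀ k : ℝ, 0 < k → k ≠ κ → f k < f κ) := by
  subst hf
  have ha : (0:ℝ) < 2 - α := by linarith
  obtain ⟨S, hS_def⟩ : ∃ S : ℝ, S = Real.sqrt (η1 ^ 2 * (1 - α) ^ 2 + 4 * α * (2 - α)) := ⟨_, rfl⟩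
  rw [← hS_def] at hκ
  have hD : (0:ℝ) < η1 ^ 2 * (1 - α) ^ 2 + 4 * α * (2 - α) := by nlinarith [sq_nonneg (η1 * (1 - α))]
  have hs : S ^ 2 = η1 ^ 2 * (1 - α) ^ 2 + 4 * α * (2 - α) := by
    rw [hS_def]; exact Real.sq_sqrt hD.le
  have habs : |η1 * (1 - α)| < S := by
    rw [hS_def]
    rw [← Real.sqrt_sq_eq_abs]
    apply Real.sqrt_lt_sqrt (sq_nonneg _)
    nlinarith
  have hbD : η1 * (1 - α) < S := lt_of_le_of_lt (le_abs_self _) habs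
  have hnbD : -(η1 * (1 - α)) < S := lt_of_le_of_lt (neg_le_abs _) habs
  obtain ⟨t1, ht1_def⟩ : ∃ t1 : ℝ, t1 = (S - η1 * (1 - α)) / (2 * (2 - α)) := ⟨_, rfl⟩
  rw [← ht1_def] at hκ
  have ht1 : 0 < t1 := by
    rw [ht1_def]; exact div_pos (by linarith) (by linarith)
  have hSt : S = 2 * (2 - α) * t1 + η1 * (1 - α) := by
    rw [ht1_def]; field_simp; ring
  have hs2 : (2 * (2 - α) * t1 + η1 * (1 - α)) ^ 2 = η1 ^ 2 * (1 - α) ^ 2 + 4 * α * (2 - α) := by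
    rw [← hSt]; exact hs
  have hroot : (2 - α) * t1 ^ 2 + η1 * (1 - α) * t1 = α := by
    have h4 : 4 * (2 - α) * ((2 - α) * t1 ^ 2 + η1 * (1 - α) * t1) = 4 * (2 - α) * α := by
      linear_combination hs2
    exact mul_left_cancel₀ (by positivity) h4
  -- κ basic facts
  have hκpos : 0 < κ := by
    rw [hκ]
    exact mul_pos (by positivity) (Real.sqrt_pos.mpr ht1)
  have hκsq : ξ ^ 2 * κ ^ 2 = t1 := by
    rw [hκ, mul_pow, Real.sq_sqrt ht1.le]
    field_simp
  -- positivity of the denominator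
  have hPden : ∀ k : ℝ, 0 < 1 + η1 * (k * ξ) ^ 2 + (k * ξ) ^ 4 := by
    intro k
    rcases eq_or_ne (k * ξ) 0 with h | h
    · rw [h]; norm_num
    · have h2 : 0 < (k * ξ) ^ 2 := by positivity
      nlinarith [sq_nonneg (1 - (k * ξ) ^ 2)]
  -- positivity of the secondary factor
  have hfac : ∀ t : ℝ, 0 < t → 0 < (2 - α) * (t + t1) + η1 * (1 - α) := by
    intro t ht
    have h2 : (2 - α) * t1 = (S - η1 * (1 - α)) / 2 := by
      rw [ht1_def]; field_simp
    nlinarith [mul_pos ha ht]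
  -- derivative of f
  have hderiv : ∀ k : ℝ, 0 < k →
      HasDerivAt (fun k : ℝ => k ^ (2 * α) / (1 + η1 * (k * ξ) ^ 2 + (k * ξ) ^ 4))
        ((-2 * ((ξ ^ 2 * k ^ 2 - t1) * ((2 - α) * (ξ ^ 2 * k ^ 2 + t1) + η1 * (1 - α))))
          * k ^ (2 * α - 1) / (1 + η1 * (k * ξ) ^ 2 + (k * ξ) ^ 4) ^ 2) k := by
    intro k hk
    have hP : 0 < 1 + η1 * (k * ξ) ^ 2 + (k * ξ) ^ 4 := hPden k
    have h1 : HasDerivAt (fun k : ℝ => k ^ (2 * α)) (2 * α * k ^ (2 * α - 1)) k :=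
      Real.hasDerivAt_rpow_const (Or.inl hk.ne')
    have h2 : HasDerivAt (fun k : ℝ => 1 + η1 * (k * ξ) ^ 2 + (k * ξ) ^ 4)
        (2 * η1 * ξ ^ 2 * k + 4 * ξ ^ 4 * k ^ 3) k := by
      have heq : (fun k : ℝ => 1 + η1 * (k * ξ) ^ 2 + (k * ξ) ^ 4)
          = fun k : ℝ => 1 + ((η1 * ξ ^ 2) * k ^ 2 + ξ ^ 4 * k ^ 4) := by
        funext x; ring
      rw [heq]
      have hp2 : HasDerivAt (fun k : ℝ => k ^ 2) (2 * k) k := by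
        simpa using hasDerivAt_pow 2 k
      have hp4 : HasDerivAt (fun k : ℝ => k ^ 4) (4 * k ^ 3) k := by
        simpa using hasDerivAt_pow 4 k
      have := ((hp2.const_mul (η1 * ξ ^ 2)).add (hp4.const_mul (ξ ^ 4))).const_add 1
      exact this.congr_deriv (by ring)
    have hd := h1.div h2 hP.ne'
    have hknum : k ^ (2 * α) = k ^ (2 * α - 1) * k := by
      nth_rewrite 1 [show (2 * α) = (2 * α - 1) + 1 by ring]
      rw [Real.rpow_add hk, Real.rpow_one]
    refine hd.congr_deriv (Eq.symm ?_)
    congr 1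
    rw [hknum]
    linear_combination (2 * k ^ (2 * α - 1)) * hroot
  have derivE : ∀ k : ℝ, 0 < k →
      deriv (fun k : ℝ => k ^ (2 * α) / (1 + η1 * (k * ξ) ^ 2 + (k * ξ) ^ 4)) k
      = (-2 * ((ξ ^ 2 * k ^ 2 - t1) * ((2 - α) * (ξ ^ 2 * k ^ 2 + t1) + η1 * (1 - α))))
          * k ^ (2 * α - 1) / (1 + η1 * (k * ξ) ^ 2 + (k * ξ) ^ 4) ^ 2 :=
    fun k hk => (hderiv k hk).deriv
  -- sign of the derivative
  have hpos : ∀ k : ℝ, 0 < k → k < κ →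
      0 < deriv (fun k : ℝ => k ^ (2 * α) / (1 + η1 * (k * ξ) ^ 2 + (k * ξ) ^ 4)) k := by
    intro k hk hkκ
    rw [derivE k hk]
    have ht : ξ ^ 2 * k ^ 2 < t1 := by
      rw [← hκsq]
      have h2 : k ^ 2 < κ ^ 2 := by nlinarith
      have h3 : (0:ℝ) < ξ ^ 2 := by positivity
      nlinarith
    have hF := hfac (ξ ^ 2 * k ^ 2) (by positivity)
    have hkp : 0 < k ^ (2 * α - 1) := Real.rpow_pos_of_pos hk _
    have hP := hPden k
    have hnum : 0 < -2 * ((ξ ^ 2 * k ^ 2 - t1) * ((2 - α) * (ξ ^ 2 * k ^ 2 + t1) + η1 * (1 - α))) := by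
      nlinarith [mul_pos (sub_pos.mpr ht) hF]
    exact div_pos (mul_pos hnum hkp) (by positivity)
  have hneg : ∀ k : ℝ, 0 < k → κ < k →
      deriv (fun k : ℝ => k ^ (2 * α) / (1 + η1 * (k * ξ) ^ 2 + (k * ξ) ^ 4)) k < 0 := by
    intro k hk hkκ
    rw [derivE k hk]
    have ht : t1 < ξ ^ 2 * k ^ 2 := by
      rw [← hκsq]
      have h2 : κ ^ 2 < k ^ 2 := by nlinarith
      have h3 : (0:ℝ) < ξ ^ 2 := by positivity
      nlinarith
    have hF := hfac (ξ ^ 2 * k ^ 2) (by positivity)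
    have hkp : 0 < k ^ (2 * α - 1) := Real.rpow_pos_of_pos hk _
    have hP := hPden k
    have hlt : -2 * ((ξ ^ 2 * k ^ 2 - t1) * ((2 - α) * (ξ ^ 2 * k ^ 2 + t1) + η1 * (1 - α))) < 0 := by
      nlinarith [mul_pos (sub_pos.mpr ht) hF]
    exact div_neg_of_neg_of_pos (mul_neg_of_neg_of_pos hlt hkp) (by positivity)
  -- monotonicity
  have hmono : StrictMonoOn (fun k : ℝ => k ^ (2 * α) / (1 + η1 * (k * ξ) ^ 2 + (k * ξ) ^ 4))
      (Set.Ioc 0 κ) := by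
    apply strictMonoOn_of_deriv_pos (convex_Ioc 0 κ)
    · intro x hx
      exact ((hderiv x hx.1).differentiableAt).continuousAt.continuousWithinAt
    · rw [interior_Ioc]
      intro x hx
      exact hpos x hx.1 hx.2
  have hanti : StrictAntiOn (fun k : ℝ => k ^ (2 * α) / (1 + η1 * (k * ξ) ^ 2 + (k * ξ) ^ 4))
      (Set.Ici κ) := by
    apply strictAntiOn_of_deriv_neg (convex_Ici κ)
    · intro x hx
      exact ((hderiv x (lt_of_lt_of_le hκpos hx)).differentiableAt).continuousAt.continuousWithinAt
    · rw [interior_Ici]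
      intro x hx
      exact hneg x (hκpos.trans hx) hx
  have hstrict : ∀ k : ℝ, 0 < k → k ≠ κ →
      (fun k : ℝ => k ^ (2 * α) / (1 + η1 * (k * ξ) ^ 2 + (k * ξ) ^ 4)) k
      < (fun k : ℝ => k ^ (2 * α) / (1 + η1 * (k * ξ) ^ 2 + (k * ξ) ^ 4)) κ := by
    intro k hk hne
    rcases lt_or_gt_of_ne hne with h | h
    · exact hmono ⟨hk, h.le⟩ ⟨hκpos, le_refl κ⟩ h
    · exact hanti Set.self_mem_Ici h.le h
  refine ⟨hκpos, ?_, ?_, hstrict⟩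
  · intro k hk
    rcases eq_or_ne k κ with h | h
    · rw [h]
    · exact (hstrict k hk h).le
  · intro k hk
    constructor
    · intro h0
      rw [derivE k hk] at h0
      have hP := hPden k
      have hkp : 0 < k ^ (2 * α - 1) := Real.rpow_pos_of_pos hk _
      have hF := hfac (ξ ^ 2 * k ^ 2) (by positivity)
      have hnum : (ξ ^ 2 * k ^ 2 - t1) = 0 := by
        by_contra hne
        rcases lt_or_gt_of_ne hne with hlt | hgt
        · have : 0 < -2 * ((ξ ^ 2 * k ^ 2 - t1) * ((2 - α) * (ξ ^ 2 * k ^ 2 + t1) + η1 * (1 - α)))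
              * k ^ (2 * α - 1) / (1 + η1 * (k * ξ) ^ 2 + (k * ξ) ^ 4) ^ 2 := by
            apply div_pos _ (by positivity)
            have : 0 < -2 * ((ξ ^ 2 * k ^ 2 - t1) * ((2 - α) * (ξ ^ 2 * k ^ 2 + t1) + η1 * (1 - α))) := by
              nlinarith
            positivity
          linarith [this.ne' h0]
        · have : -2 * ((ξ ^ 2 * k ^ 2 - t1) * ((2 - α) * (ξ ^ 2 * k ^ 2 + t1) + η1 * (1 - α)))
              * k ^ (2 * α - 1) / (1 + η1 * (k * ξ) ^ 2 + (k * ξ) ^ 4) ^ 2 < 0 := by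
            apply div_neg_of_neg_of_pos _ (by positivity)
            have hlt : -2 * ((ξ ^ 2 * k ^ 2 - t1) * ((2 - α) * (ξ ^ 2 * k ^ 2 + t1) + η1 * (1 - α))) < 0 := by
              nlinarith
            exact mul_neg_of_neg_of_pos hlt hkp
          linarith [this.ne h0]
      have hk2 : k ^ 2 = κ ^ 2 := by
        have hξ2 : (ξ ^ 2 : ℝ) ≠ 0 := by positivity
        have : ξ ^ 2 * k ^ 2 = ξ ^ 2 * κ ^ 2 := by rw [hκsq]; linarith
        exact mul_left_cancel₀ hξ2 this
      have hmul : (k - κ) * (k + κ) = 0 := by linear_combination hk2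
      rcases mul_eq_zero.mp hmul with h | h
      · linarith
      · linarith
    · intro h
      subst h
      rw [derivE k hκpos, hκsq]
      simp
end

section
/- Let 0 < α ≤ 1 and −2 < η1 < 0 satisfy (α+1)²·η1² > 4α(α+2), and define u_± = √( (−(α+1)·η1 ± √((α+1)²η1² − 4α(α+2))) / (2(α+2)) ). Then 0 < u_− < u_+, the function φ(u) = u^{2α}·(1 + η1·u² + u⁴) has exactly two critical points on (0, ∞), namely u_− and u_+, and φ has a strict local maximum at u_− and a strict local minimum at u_+. -/
open MeasureTheory Real Topology

/-- For `0 < α ≤ 1` and `−2 < η₁ < 0` with `(α+1)²η₁² > 4α(α+2)`, the function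
`φ(u) = u^{2α}(1 + η₁u² + u⁴)` has exactly two critical points `0 < u₋ < u₊`
on `(0,∞)`, with a strict local maximum at `u₋` and a strict local minimum at `u₊`. -/
theorem bessel_lommel_phi_critical_points (α η1 um up : ℝ) (φ : ℝ → ℝ)
    (hα0 : 0 < α) (hα1 : α ≤ 1) (hη1 : -2 < η1) (hη2 : η1 < 0)
    (hthr : 4 * α * (α + 2) < (α + 1) ^ 2 * η1 ^ 2)
    (hum : um = Real.sqrt
        ((-(α + 1) * η1 - Real.sqrt ((α + 1) ^ 2 * η1 ^ 2 - 4 * α * (α + 2)))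
          / (2 * (α + 2))))
    (hup : up = Real.sqrt
        ((-(α + 1) * η1 + Real.sqrt ((α + 1) ^ 2 * η1 ^ 2 - 4 * α * (α + 2)))
          / (2 * (α + 2))))
    (hφ : φ = fun u : ℝ => u ^ (2 * α) * (1 + η1 * u ^ 2 + u ^ 4)) :
    0 < um ∧ um < up ∧
    (∀ u : ℝ, 0 < u → (deriv φ u = 0 ↔ u = um ∨ u = up)) ∧
    (∀ᶠ x in 𝓝[≠] um, φ x < φ um) ∧
    (∀ᶠ x in 𝓝[≠] up, φ up < φ x) := by
  have hα2 : (0:ℝ) < α + 2 := by linarith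
  have hc : 0 < -(α + 1) * η1 := by nlinarith
  have hD : 0 < (α + 1) ^ 2 * η1 ^ 2 - 4 * α * (α + 2) := by linarith
  obtain ⟨s, hsdef⟩ : ∃ t : ℝ, t = Real.sqrt ((α + 1) ^ 2 * η1 ^ 2 - 4 * α * (α + 2)) :=
    ⟨_, rfl⟩
  rw [← hsdef] at hum hup
  have hs2 : s ^ 2 = (α + 1) ^ 2 * η1 ^ 2 - 4 * α * (α + 2) := by
    rw [hsdef]; exact Real.sq_sqrt hD.le
  have hs0 : 0 < s := by rw [hsdef]; exact Real.sqrt_pos.mpr hD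
  have hslt : s < -(α + 1) * η1 := by nlinarith [hs2, hs0, hc, hα0, hα2]
  obtain ⟨tm, htmdef⟩ : ∃ t : ℝ, t = (-(α + 1) * η1 - s) / (2 * (α + 2)) := ⟨_, rfl⟩
  obtain ⟨tp, htpdef⟩ : ∃ t : ℝ, t = (-(α + 1) * η1 + s) / (2 * (α + 2)) := ⟨_, rfl⟩
  rw [← htmdef] at hum
  rw [← htpdef] at hup
  have htm0 : 0 < tm := by rw [htmdef]; exact div_pos (by linarith) (by linarith)
  have htmtp : tm < tp := by
    rw [htmdef, htpdef, div_lt_div_iff_of_pos_right (by linarith)]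
    linarith
  have htp0 : 0 < tp := lt_trans htm0 htmtp
  have hum2 : um ^ 2 = tm := by rw [hum]; exact Real.sq_sqrt htm0.le
  have hup2 : up ^ 2 = tp := by rw [hup]; exact Real.sq_sqrt htp0.le
  have hum0 : 0 < um := by rw [hum]; exact Real.sqrt_pos.mpr htm0
  have hup0 : 0 < up := by rw [hup]; exact Real.sqrt_pos.mpr htp0
  have humup : um < up := by
    rw [hum, hup]; exact Real.sqrt_lt_sqrt htm0.le htmtp
  -- quadratic relations
  have hqsum : (α + 2) * (tm + tp) = -(α + 1) * η1 := by
    rw [htmdef, htpdef]; field_simp; ring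
  have hqprod : (α + 2) * (tm * tp) = α := by
    rw [htmdef, htpdef]
    field_simp
    linear_combination (-1) * hs2
  -- key polynomial identity
  have key : ∀ u : ℝ, 2 * α * (1 + η1 * u ^ 2 + u ^ 4) + u * (η1 * (2 * u) + 4 * u ^ 3)
      = 2 * ((α + 2) * (u ^ 2 - tm) * (u ^ 2 - tp)) := by
    intro u
    linear_combination 2 * u ^ 2 * hqsum - 2 * hqprod
  -- derivative
  have hder : ∀ u : ℝ, 0 < u → HasDerivAt φ
      (u ^ (2 * α - 1) * (2 * ((α + 2) * (u ^ 2 - tm) * (u ^ 2 - tp)))) u := by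
    intro u hu
    have h1 : HasDerivAt (fun x : ℝ => x ^ (2 * α)) ((2 * α) * u ^ (2 * α - 1)) u :=
      Real.hasDerivAt_rpow_const (Or.inl hu.ne')
    have h2 : HasDerivAt (fun x : ℝ => 1 + η1 * x ^ 2 + x ^ 4)
        (η1 * (2 * u) + 4 * u ^ 3) u := by
      have ha : HasDerivAt (fun x : ℝ => x ^ 2) (2 * u) u := by
        simpa using hasDerivAt_pow 2 u
      have hb : HasDerivAt (fun x : ℝ => x ^ 4) (4 * u ^ 3) u := by
        simpa using hasDerivAt_pow 4 u
      have := ((ha.const_mul η1).add hb).const_add 1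
      convert this using 2
      · rfl
      · rfl
      · simp only [Pi.add_apply]; ring
    have h3 := h1.mul h2
    rw [hφ]
    convert h3 using 1
    · rfl
    · rfl
    · rfl
    have hupow : u ^ (2 * α) = u ^ (2 * α - 1) * u := by
      have h := Real.rpow_add hu (2 * α - 1) 1
      rw [Real.rpow_one] at h
      rw [← h]; norm_num
    rw [hupow]
    linear_combination (-(u ^ (2 * α - 1))) * (key u)
  have hderiv_eq : ∀ u : ℝ, 0 < u → deriv φ u
      = u ^ (2 * α - 1) * (2 * ((α + 2) * (u ^ 2 - tm) * (u ^ 2 - tp))) := fun u hu =>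
    (hder u hu).deriv
  have hrpos : ∀ u : ℝ, 0 < u → (0:ℝ) < u ^ (2 * α - 1) := fun u hu =>
    Real.rpow_pos_of_pos hu _
  -- sign of derivative
  have hpos_lt : ∀ u : ℝ, 0 < u → u < um → 0 < deriv φ u := by
    intro u hu hlt
    rw [hderiv_eq u hu]
    have h0 : u * u < um * um := mul_lt_mul'' hlt hlt hu.le hu.le
    have h1 : u ^ 2 < tm := by rw [← hum2, pow_two, pow_two]; exact h0
    have h2 : u ^ 2 < tp := lt_trans h1 htmtp
    have hfac : 0 < (α + 2) * (u ^ 2 - tm) * (u ^ 2 - tp) :=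
      mul_pos_of_neg_of_neg (mul_neg_of_pos_of_neg hα2 (by linarith)) (by linarith)
    exact mul_pos (hrpos u hu) (by linarith)
  have hneg_mid : ∀ u : ℝ, um < u → u < up → deriv φ u < 0 := by
    intro u h1 h2
    have hu : 0 < u := lt_trans hum0 h1
    rw [hderiv_eq u hu]
    have h0a : um * um < u * u := mul_lt_mul'' h1 h1 hum0.le hum0.le
    have h0b : u * u < up * up := mul_lt_mul'' h2 h2 hu.le hu.le
    have ha : tm < u ^ 2 := by rw [← hum2, pow_two, pow_two]; exact h0a
    have hb : u ^ 2 < tp := by rw [← hup2, pow_two, pow_two]; exact h0b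
    have hfac : (α + 2) * (u ^ 2 - tm) * (u ^ 2 - tp) < 0 :=
      mul_neg_of_pos_of_neg (mul_pos hα2 (by linarith)) (by linarith)
    exact mul_neg_of_pos_of_neg (hrpos u hu) (by linarith)
  have hpos_gt : ∀ u : ℝ, up < u → 0 < deriv φ u := by
    intro u h1
    have hu : 0 < u := lt_trans hup0 h1
    rw [hderiv_eq u hu]
    have h0 : up * up < u * u := mul_lt_mul'' h1 h1 hup0.le hup0.le
    have hb : tp < u ^ 2 := by rw [← hup2, pow_two, pow_two]; exact h0
    have ha : tm < u ^ 2 := lt_trans htmtp hb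
    have hfac : 0 < (α + 2) * (u ^ 2 - tm) * (u ^ 2 - tp) :=
      mul_pos (mul_pos hα2 (by linarith)) (by linarith)
    exact mul_pos (hrpos u hu) (by linarith)
  -- continuity on positives
  have hcont : ∀ x : ℝ, 0 < x → ContinuousAt φ x := fun x hx =>
    (hder x hx).continuousAt
  refine ⟨hum0, humup, ?_, ?_, ?_⟩
  · -- critical points
    intro u hu
    rw [hderiv_eq u hu]
    constructor
    · intro h
      have hne : u ^ (2 * α - 1) ≠ 0 := (hrpos u hu).ne'
      have h2 : (u ^ 2 - tm) * (u ^ 2 - tp) = 0 := by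
        rcases mul_eq_zero.mp h with h' | h'
        · exact absurd h' hne
        · have h3 : (α + 2) * (u ^ 2 - tm) * (u ^ 2 - tp) = 0 := by linarith
          rcases mul_eq_zero.mp h3 with h4 | h4
          · rcases mul_eq_zero.mp h4 with h5 | h5
            · exact absurd h5 hα2.ne'
            · rw [h5, zero_mul]
          · rw [h4, mul_zero]
      rcases mul_eq_zero.mp h2 with h' | h'
      · left
        have hu2 : u ^ 2 = tm := by linarith
        rw [hum, ← hu2, Real.sqrt_sq hu.le]
      · right
        have hu2 : u ^ 2 = tp := by linarith
        rw [hup, ← hu2, Real.sqrt_sq hu.le]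
    · rintro (rfl | rfl) <;> simp [hum2, hup2]
  · -- strict local max at um
    have hmono : StrictMonoOn φ (Set.Icc (um / 2) um) := by
      apply strictMonoOn_of_deriv_pos (convex_Icc _ _)
      · intro x hx
        exact (hcont x (by cases hx with | intro h1 h2 => linarith)).continuousWithinAt
      · rw [interior_Icc]
        intro x hx
        exact hpos_lt x (by cases hx with | intro h1 h2 => linarith) hx.2
    have hanti : StrictAntiOn φ (Set.Icc um ((um + up) / 2)) := by
      apply strictAntiOn_of_deriv_neg (convex_Icc _ _)
      · intro x hx
        exact (hcont x (by cases hx with | intro h1 h2 => linarith)).continuousWithinAt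
      · rw [interior_Icc]
        intro x hx
        exact hneg_mid x hx.1 (by cases hx with | intro h1 h2 => linarith)
    have hnb : Set.Ioo (um / 2) ((um + up) / 2) ∈ 𝓝 um :=
      Ioo_mem_nhds (by linarith) (by linarith)
    filter_upwards [self_mem_nhdsWithin, mem_nhdsWithin_of_mem_nhds hnb] with x hx hx2
    rcases lt_or_gt_of_ne hx with h | h
    · exact hmono ⟨hx2.1.le, h.le⟩ ⟨by linarith, le_refl _⟩ h
    · exact hanti ⟨le_refl _, by linarith⟩ ⟨h.le, hx2.2.le⟩ h
  · -- strict local min at up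
    have hanti : StrictAntiOn φ (Set.Icc ((um + up) / 2) up) := by
      apply strictAntiOn_of_deriv_neg (convex_Icc _ _)
      · intro x hx
        exact (hcont x (by cases hx with | intro h1 h2 => linarith)).continuousWithinAt
      · rw [interior_Icc]
        intro x hx
        exact hneg_mid x (by cases hx with | intro h1 h2 => linarith) hx.2
    have hmono : StrictMonoOn φ (Set.Icc up (up + 1)) := by
      apply strictMonoOn_of_deriv_pos (convex_Icc _ _)
      · intro x hx
        exact (hcont x (by cases hx with | intro h1 h2 => linarith)).continuousWithinAt
      · rw [interior_Icc]
        intro x hx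
        exact hpos_gt x hx.1
    have hnb : Set.Ioo ((um + up) / 2) (up + 1) ∈ 𝓝 up :=
      Ioo_mem_nhds (by linarith) (by linarith)
    filter_upwards [self_mem_nhdsWithin, mem_nhdsWithin_of_mem_nhds hnb] with x hx hx2
    rcases lt_or_gt_of_ne hx with h | h
    · exact hanti ⟨hx2.1.le, h.le⟩ ⟨by linarith, le_refl _⟩ h
    · exact hmono ⟨le_refl _, by linarith⟩ ⟨h.le, hx2.2.le⟩ h
end
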